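/- Let C : ℕ → ℕ be a sequence with C(0) = 1, and define E : ℕ → ℕ by E(n) = Σ_{k=0}^{n} catalan(k) · Σ_{γ} Π_{i=0}^{k} C(γ_i), where catalan(k) is the k-th Catalan number and the inner sum is over all weak compositions γ = (γ_0, …, γ_k) of n − k into k + 1 nonnegative parts (i.e. γ : Fin(k+1) → ℕ with Σ_i γ_i = n − k). Then E(0) = 1 and, for every n ≥ 1, E(n) = C(n) + Σ_{i=0}^{n-1} E(i)·E(n−1−i). -/

import Mathlib

open Finset PowerSeries

private lemma tupleSum_succ (C : ℕ → ℕ) (k n : ℕ) :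
    ∑ γ ∈ Finset.Nat.antidiagonalTuple (k + 1) n, ∏ i, C (γ i)
      = ∑ p ∈ Finset.HasAntidiagonal.antidiagonal n,
          C p.1 * ∑ γ ∈ Finset.Nat.antidiagonalTuple k p.2, ∏ i, C (γ i) := by
  simp_rw [Finset.mul_sum]
  rw [Finset.sum_sigma']
  refine Finset.sum_nbij'
    (fun (γ : Fin (k + 1) → ℕ) =>
      (⟨(γ 0, ∑ i, γ (Fin.succ i)), Fin.tail γ⟩ : (_ : ℕ × ℕ) × (Fin k → ℕ)))
    (fun x => Fin.cons x.1.1 x.2) ?_ ?_ ?_ ?_ ?_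
  · intro γ hγ
    rw [Finset.Nat.mem_antidiagonalTuple] at hγ
    rw [Finset.mem_sigma, Finset.HasAntidiagonal.mem_antidiagonal, Finset.Nat.mem_antidiagonalTuple]
    constructor
    · rw [← hγ, Fin.sum_univ_succ]
    · rfl
  · intro x hx
    rw [Finset.mem_sigma, Finset.HasAntidiagonal.mem_antidiagonal, Finset.Nat.mem_antidiagonalTuple] at hx
    rw [Finset.Nat.mem_antidiagonalTuple, Fin.sum_cons, hx.2, hx.1]
  · intro γ _
    exact Fin.cons_self_tail γ
  · intro x hx
    rw [Finset.mem_sigma, Finset.HasAntidiagonal.mem_antidiagonal, Finset.Nat.mem_antidiagonalTuple] at hx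
    refine Sigma.ext ?_ (heq_of_eq ?_)
    · show ((Fin.cons x.1.1 x.2 : Fin (k + 1) → ℕ) 0,
        ∑ i, (Fin.cons x.1.1 x.2 : Fin (k + 1) → ℕ) (Fin.succ i)) = x.1
      simp only [Fin.cons_zero, Fin.cons_succ]
      rw [hx.2]
    · show Fin.tail (Fin.cons x.1.1 x.2 : Fin (k + 1) → ℕ) = x.2
      exact Fin.tail_cons _ _
  · intro γ _
    rw [Fin.prod_univ_succ]
    rfl

private lemma tupleSum_eq_coeff_pow (C : ℕ → ℕ) : ∀ (k n : ℕ),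
    ∑ γ ∈ Finset.Nat.antidiagonalTuple k n, ∏ i, C (γ i)
      = PowerSeries.coeff n ((PowerSeries.mk C) ^ k)
  | 0, 0 => by simp
  | 0, (n + 1) => by simp [PowerSeries.coeff_one]
  | (k + 1), n => by
    rw [tupleSum_succ, pow_succ', PowerSeries.coeff_mul]
    refine Finset.sum_congr rfl fun p _ => ?_
    rw [tupleSum_eq_coeff_pow C k p.2, PowerSeries.coeff_mk]

theorem tree_composition_recursion
    (C : ℕ → ℕ) (hC : C 0 = 1)
    (E : ℕ → ℕ)
    (hE : ∀ n, E n = ∑ k ∈ Finset.range (n + 1), catalan k *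
      ∑ γ ∈ Finset.Nat.antidiagonalTuple (k + 1) (n - k), ∏ i, C (γ i)) :
    E 0 = 1 ∧ ∀ n, 1 ≤ n → E n = C n + ∑ i ∈ Finset.range n, E i * E (n - 1 - i) := by
  set c : PowerSeries ℕ := PowerSeries.mk C with hc
  have hE' : ∀ n, E n = ∑ k ∈ Finset.range (n + 1),
      catalan k * PowerSeries.coeff (n - k) (c ^ (k + 1)) := by
    intro n
    rw [hE n]
    exact Finset.sum_congr rfl fun k _ => by rw [tupleSum_eq_coeff_pow]
  -- the truncated generating function
  set S : ℕ → PowerSeries ℕ := fun N => ∑ k ∈ Finset.range N,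
    PowerSeries.C (catalan k) * c ^ (k + 1) * X ^ k with hS
  have coeff_S : ∀ n N, n < N → PowerSeries.coeff n (S N) = E n := by
    intro n N hn
    rw [hS]
    simp only [map_sum, mul_assoc, PowerSeries.coeff_C_mul, PowerSeries.coeff_mul_X_pow']
    rw [hE' n]
    rw [← Finset.sum_subset (Finset.range_subset_range.mpr hn)]
    · refine Finset.sum_congr rfl fun k hk => ?_
      rw [Finset.mem_range] at hk
      rw [if_pos (by omega)]
    · intro k _ hk
      rw [Finset.mem_range] at hk
      rw [if_neg (by omega), mul_zero]
  constructor
  · rw [hE]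
    simp [hC]
  · intro n hn
    obtain ⟨m, rfl⟩ : ∃ m, n = m + 1 := ⟨n - 1, by omega⟩
    -- left side
    rw [hE' (m + 1), Finset.sum_range_succ']
    have hf0 : catalan 0 * PowerSeries.coeff (m + 1 - 0) (c ^ (0 + 1)) = C (m + 1) := by
      simp [hc]
    rw [hf0]
    -- RHS sum equals coeff m (S (m+1) * S (m+1))
    have hrhs : ∑ i ∈ Finset.range (m + 1), E i * E (m + 1 - 1 - i)
        = PowerSeries.coeff m (S (m + 1) * S (m + 1)) := by
      rw [PowerSeries.coeff_mul, Finset.Nat.sum_antidiagonal_eq_sum_range_succ_mk]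
      refine Finset.sum_congr rfl fun i hi => ?_
      rw [Finset.mem_range] at hi
      rw [coeff_S i (m + 1) (by omega), coeff_S (m - i) (m + 1) (by omega)]
      have h1 : m + 1 - 1 - i = m - i := by omega
      rw [h1]
    -- expand the product
    have hexp : PowerSeries.coeff m (S (m + 1) * S (m + 1))
        = ∑ a ∈ Finset.range (m + 1), ∑ b ∈ Finset.range (m + 1),
            catalan a * catalan b *
              (if a + b ≤ m then PowerSeries.coeff (m - (a + b)) (c ^ (a + b + 2)) else 0) := by
      rw [hS]
      rw [Finset.sum_mul_sum]
      rw [map_sum]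
      refine Finset.sum_congr rfl fun a _ => ?_
      rw [map_sum]
      refine Finset.sum_congr rfl fun b _ => ?_
      have : PowerSeries.C (catalan a) * c ^ (a + 1) * X ^ a *
          (PowerSeries.C (catalan b) * c ^ (b + 1) * X ^ b)
          = PowerSeries.C (catalan a) * (PowerSeries.C (catalan b) *
              (c ^ (a + b + 2) * X ^ (a + b))) := by
        rw [pow_add, pow_add c]
        ring_nf
      rw [this, PowerSeries.coeff_C_mul, PowerSeries.coeff_C_mul,
        PowerSeries.coeff_mul_X_pow']
      ring
    -- LHS: use catalan recursion
    have hlhs : ∑ k ∈ Finset.range (m + 1),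
        catalan (k + 1) * PowerSeries.coeff (m + 1 - (k + 1)) (c ^ (k + 1 + 1))
        = ∑ k ∈ Finset.range (m + 1), ∑ p ∈ Finset.HasAntidiagonal.antidiagonal k,
            catalan p.1 * catalan p.2 *
              (if p.1 + p.2 ≤ m then
                PowerSeries.coeff (m - (p.1 + p.2)) (c ^ (p.1 + p.2 + 2)) else 0) := by
      refine Finset.sum_congr rfl fun k hk => ?_
      rw [Finset.mem_range] at hk
      rw [catalan_succ', Finset.sum_mul]
      refine Finset.sum_congr rfl fun p hp => ?_
      rw [Finset.HasAntidiagonal.mem_antidiagonal] at hp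
      rw [if_pos (by omega)]
      have h1 : m + 1 - (k + 1) = m - (p.1 + p.2) := by omega
      have h2 : k + 1 + 1 = p.1 + p.2 + 2 := by omega
      rw [h1, h2]
    rw [add_comm]
    congr 1
    rw [hrhs, hexp, hlhs]
    -- reindexing: nested antidiagonal sums = double range sums
    have hset : (Finset.range (m + 1)).biUnion (fun k => Finset.HasAntidiagonal.antidiagonal k)
        = (Finset.range (m + 1) ×ˢ Finset.range (m + 1)).filter
            (fun p => p.1 + p.2 ≤ m) := by
      ext p
      simp only [Finset.mem_biUnion, Finset.mem_range, Finset.HasAntidiagonal.mem_antidiagonal,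
        Finset.mem_filter, Finset.mem_product]
      constructor
      · rintro ⟨k, hk, rfl⟩
        omega
      · rintro ⟨⟨_, _⟩, h⟩
        exact ⟨p.1 + p.2, by omega, rfl⟩
    rw [← Finset.sum_biUnion (by
      intro x _ y _ hxy
      simp only [Finset.disjoint_left, Finset.HasAntidiagonal.mem_antidiagonal]
      rintro p rfl h
      exact hxy h)]
    rw [hset, Finset.sum_filter, Finset.sum_product]
    refine Finset.sum_congr rfl fun a _ => Finset.sum_congr rfl fun b _ => ?_
    by_cases h : a + b ≤ m
    · rw [if_pos h]
    · rw [if_neg h, if_neg h, mul_zero]
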